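/- arXiv:2102.03967 — 2 statements merged into one kernel-verified Lean document; each statement's English description precedes it below -/
import Mathlib

section
/- Let C be a chain complex and D' ⊆ D graded abelian subgroups of C. Then the induced chain map Inf(D,C)/Inf(D',C) → Sup(D,C)/Sup(D',C) induces an isomorphism on homology in every degree. -/
/-- Oriented `n`-simplices on a vertex set `V`: finsets of cardinality `n+1`. -/
abbrev Simp (V : Type) (n : ℕ) : Type := {σ : Finset V // σ.card = n + 1}

/-- The group of `n`-chains with coefficients in `G` on the full simplex on `V`. -/
abbrev Ch (V : Type) (G : Type) [AddCommGroup G] (n : ℕ) : Type := Simp V n →₀ G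

/-- Boundary of a single `(n+1)`-simplex with coefficient `g`. -/
noncomputable def bdryFun (V : Type) [LinearOrder V] (G : Type) [AddCommGroup G]
    (n : ℕ) (σ : Simp V (n + 1)) (g : G) : Ch V G n :=
  ∑ v ∈ σ.1.attach, Finsupp.single
    ⟨σ.1.erase v.1, by rw [Finset.card_erase_of_mem v.2, σ.2]; omega⟩
    (((-1 : ℤ) ^ ((σ.1.filter fun w => w < v.1).card)) • g)

/-- The simplicial boundary homomorphism `C_{n+1} → C_n`. -/
noncomputable def bdry (V : Type) [LinearOrder V] (G : Type) [AddCommGroup G]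
    (n : ℕ) : Ch V G (n + 1) →+ Ch V G n :=
  Finsupp.liftAddHom fun σ =>
    { toFun := bdryFun V G n σ
      map_zero' := by simp [bdryFun]
      map_add' := fun a b => by
        simp [bdryFun, smul_add, Finsupp.single_add, Finset.sum_add_distrib] }

/-- The subgroup `G(K)_n ⊆ C_n` of chains supported on the `n`-hyperedges of `K`. -/
def chainsOn (V : Type) [LinearOrder V] (G : Type) [AddCommGroup G]
    (K : Set (Finset V)) (n : ℕ) : AddSubgroup (Ch V G n) where
  carrier := {c | ∀ σ ∈ c.support, (σ : Simp V n).1 ∈ K}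
  zero_mem' := by simp
  add_mem' := by
    intro a b ha hb σ hσ
    rcases Finset.mem_union.mp (Finsupp.support_add hσ) with h | h
    exacts [ha σ h, hb σ h]
  neg_mem' := by
    intro a ha σ hσ
    exact ha σ (by simpa using hσ)

section Generic

variable {C : ℕ → Type} [∀ n, AddCommGroup (C n)]

/-- The infimum chain complex of a graded subgroup `D` inside `(C, d)`. -/
def InfC (d : ∀ n, C (n + 1) →+ C n) (D : ∀ n, AddSubgroup (C n)) :
    ∀ n, AddSubgroup (C n)
  | 0 => D 0
  | (n + 1) => D (n + 1) ⊓ (D n).comap (d n)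

/-- The supremum chain complex of a graded subgroup `D` inside `(C, d)`. -/
def SupC (d : ∀ n, C (n + 1) →+ C n) (D : ∀ n, AddSubgroup (C n)) (n : ℕ) :
    AddSubgroup (C n) :=
  D n ⊔ (D (n + 1)).map (d n)

/-- Relative cycles of the pair of graded subgroups `(K, L)`. -/
def relZ (d : ∀ n, C (n + 1) →+ C n) (K L : ∀ n, AddSubgroup (C n)) :
    ∀ n, AddSubgroup (C n)
  | 0 => K 0
  | (n + 1) => K (n + 1) ⊓ (L n).comap (d n)

/-- Relative boundaries of the pair of graded subgroups `(K, L)`. -/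
def relB (d : ∀ n, C (n + 1) →+ C n) (K L : ∀ n, AddSubgroup (C n)) (n : ℕ) :
    AddSubgroup (C n) :=
  ((K (n + 1)).map (d n) ⊔ L n) ⊓ relZ d K L n

/-- Relative homology of the pair `(K, L)`, i.e. the homology of the quotient chain
complex `K/L`.  (Taking `L = ⊥` gives the absolute homology of `K`.) -/
abbrev relH (d : ∀ n, C (n + 1) →+ C n) (K L : ∀ n, AddSubgroup (C n)) (n : ℕ) : Type _ :=
  relZ d K L n ⧸ (relB d K L n).addSubgroupOf (relZ d K L n)

theorem relZ_mono (d : ∀ n, C (n + 1) →+ C n) {K L K' L' : ∀ n, AddSubgroup (C n)}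
    (hK : ∀ n, K n ≤ K' n) (hL : ∀ n, L n ≤ L' n) :
    ∀ n, relZ d K L n ≤ relZ d K' L' n
  | 0 => hK 0
  | (n + 1) => inf_le_inf (hK (n + 1)) (AddSubgroup.comap_mono (hL n))

theorem relB_mono (d : ∀ n, C (n + 1) →+ C n) {K L K' L' : ∀ n, AddSubgroup (C n)}
    (hK : ∀ n, K n ≤ K' n) (hL : ∀ n, L n ≤ L' n) (n : ℕ) :
    relB d K L n ≤ relB d K' L' n :=
  inf_le_inf (sup_le_sup (AddSubgroup.map_mono (hK (n + 1))) (hL n))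
    (relZ_mono d hK hL n)

/-- The map on relative homology induced by an inclusion of pairs. -/
noncomputable def inducedRelMap (d : ∀ n, C (n + 1) →+ C n)
    {K L K' L' : ∀ n, AddSubgroup (C n)}
    (hK : ∀ n, K n ≤ K' n) (hL : ∀ n, L n ≤ L' n) (n : ℕ) :
    relH d K L n →+ relH d K' L' n :=
  QuotientAddGroup.map _ _ (AddSubgroup.inclusion (relZ_mono d hK hL n)) (by
    intro x hx
    simp only [AddSubgroup.mem_comap, AddSubgroup.mem_addSubgroupOf,
      AddSubgroup.coe_inclusion] at hx ⊢
    exact relB_mono d hK hL n hx)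

theorem InfC_le_SupC (d : ∀ n, C (n + 1) →+ C n) (D : ∀ n, AddSubgroup (C n)) :
    ∀ n, InfC d D n ≤ SupC d D n := by
  intro n
  cases n with
  | zero => exact le_sup_left
  | succ n => exact le_trans inf_le_left le_sup_left

theorem InfC_mono (d : ∀ n, C (n + 1) →+ C n) {D D' : ∀ n, AddSubgroup (C n)}
    (h : ∀ n, D n ≤ D' n) : ∀ n, InfC d D n ≤ InfC d D' n
  | 0 => h 0
  | (n + 1) => inf_le_inf (h (n + 1)) (AddSubgroup.comap_mono (h n))

end Generic

theorem chainsOn_mono (V : Type) [LinearOrder V] (G : Type) [AddCommGroup G]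
    {K K' : Set (Finset V)} (h : K ⊆ K') (n : ℕ) :
    chainsOn V G K n ≤ chainsOn V G K' n := by
  intro c hc σ hσ
  exact h (hc σ hσ)

section Aux

variable {C : ℕ → Type} [∀ n, AddCommGroup (C n)]

theorem InfC_le (d : ∀ n, C (n + 1) →+ C n) (D : ∀ n, AddSubgroup (C n)) :
    ∀ n, InfC d D n ≤ D n
  | 0 => le_rfl
  | (n + 1) => inf_le_left

theorem le_SupC (d : ∀ n, C (n + 1) →+ C n) (D : ∀ n, AddSubgroup (C n)) (n : ℕ) :
    D n ≤ SupC d D n := le_sup_left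

theorem key_inj (d : ∀ n, C (n + 1) →+ C n) (hdd : ∀ n x, d n (d (n + 1) x) = 0)
    (D D' : ∀ n, AddSubgroup (C n)) (hD : ∀ n, D' n ≤ D n) (n : ℕ) (x : C n)
    (hxZ : x ∈ relZ d (InfC d D) (InfC d D') n)
    (hxB : x ∈ relB d (SupC d D) (SupC d D') n) :
    x ∈ relB d (InfC d D) (InfC d D') n := by
  cases n with
  | zero =>
    have hxD : x ∈ D 0 := hxZ
    obtain ⟨p, hp, t, ht, hpt⟩ := AddSubgroup.mem_sup.mp hxB.1
    obtain ⟨s, hs, rfl⟩ := AddSubgroup.mem_map.mp hp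
    obtain ⟨a, ha, b, hb, rfl⟩ := AddSubgroup.mem_sup.mp hs
    obtain ⟨b', hb', rfl⟩ := AddSubgroup.mem_map.mp hb
    obtain ⟨e, he, c', hc, rfl⟩ := AddSubgroup.mem_sup.mp ht
    obtain ⟨c, hcm, rfl⟩ := AddSubgroup.mem_map.mp hc
    have hx : d 0 (a + c) + e = x := by
      rw [← hpt, map_add, map_add, hdd]; abel
    have hw : a + c ∈ InfC d D 1 := by
      refine ⟨add_mem ha (hD 1 hcm), ?_⟩
      have : d 0 (a + c) = x - e := by rw [← hx]; abel
      exact AddSubgroup.mem_comap.mpr (this ▸ sub_mem hxD (hD 0 he))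
    refine ⟨AddSubgroup.mem_sup.mpr ⟨d 0 (a + c),
      AddSubgroup.mem_map.mpr ⟨a + c, hw, rfl⟩, e, he, hx⟩, hxZ⟩
  | succ n =>
    have hxD : x ∈ D (n + 1) := hxZ.1.1
    have hdx : d n x ∈ D' n := InfC_le d D' n (AddSubgroup.mem_comap.mp hxZ.2)
    obtain ⟨p, hp, t, ht, hpt⟩ := AddSubgroup.mem_sup.mp hxB.1
    obtain ⟨s, hs, rfl⟩ := AddSubgroup.mem_map.mp hp
    obtain ⟨a, ha, b, hb, rfl⟩ := AddSubgroup.mem_sup.mp hs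
    obtain ⟨b', hb', rfl⟩ := AddSubgroup.mem_map.mp hb
    obtain ⟨e, he, c', hc, rfl⟩ := AddSubgroup.mem_sup.mp ht
    obtain ⟨c, hcm, rfl⟩ := AddSubgroup.mem_map.mp hc
    have hx : d (n + 1) (a + c) + e = x := by
      rw [← hpt, map_add, map_add, hdd]; abel
    have hde : d n e = d n x := by
      have := congrArg (d n) hx
      rwa [map_add, hdd, zero_add] at this
    have hw : a + c ∈ InfC d D (n + 2) := by
      refine ⟨add_mem ha (hD (n + 2) hcm), ?_⟩
      have : d (n + 1) (a + c) = x - e := by rw [← hx]; abel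
      exact AddSubgroup.mem_comap.mpr (this ▸ sub_mem hxD (hD (n + 1) he))
    have he' : e ∈ InfC d D' (n + 1) :=
      ⟨he, AddSubgroup.mem_comap.mpr (hde ▸ hdx)⟩
    refine ⟨AddSubgroup.mem_sup.mpr ⟨d (n + 1) (a + c),
      AddSubgroup.mem_map.mpr ⟨a + c, hw, rfl⟩, e, he', hx⟩, hxZ⟩

theorem key_surj (d : ∀ n, C (n + 1) →+ C n) (hdd : ∀ n x, d n (d (n + 1) x) = 0)
    (D D' : ∀ n, AddSubgroup (C n)) (hD : ∀ n, D' n ≤ D n) (n : ℕ) (y : C n)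
    (hy : y ∈ relZ d (SupC d D) (SupC d D') n) :
    ∃ x ∈ relZ d (InfC d D) (InfC d D') n,
      y - x ∈ relB d (SupC d D) (SupC d D') n := by
  cases n with
  | zero =>
    obtain ⟨u, hu, p, hp, hupy⟩ := AddSubgroup.mem_sup.mp (show y ∈ SupC d D 0 from hy)
    obtain ⟨a, ha, rfl⟩ := AddSubgroup.mem_map.mp hp
    refine ⟨u, hu, AddSubgroup.mem_inf.mpr ⟨?_, ?_⟩⟩
    · refine AddSubgroup.mem_sup.mpr ⟨d 0 a,
        AddSubgroup.mem_map.mpr ⟨a, le_SupC d D 1 ha, rfl⟩,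
        0, zero_mem _, ?_⟩
      rw [← hupy]; abel
    · exact sub_mem hy (le_SupC d D 0 hu)
  | succ n =>
    obtain ⟨u, hu, p, hp, hupy⟩ := AddSubgroup.mem_sup.mp hy.1
    obtain ⟨a, ha, rfl⟩ := AddSubgroup.mem_map.mp hp
    obtain ⟨v, hv, q, hq, hvq⟩ :=
      AddSubgroup.mem_sup.mp (AddSubgroup.mem_comap.mp hy.2)
    obtain ⟨c, hcm, rfl⟩ := AddSubgroup.mem_map.mp hq
    have hdx : d n (u - c) = v := by
      have hdu : d n u = d n y := by rw [← hupy, map_add, hdd, add_zero]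
      rw [map_sub, hdu, ← hvq]; abel
    have hxZ : u - c ∈ relZ d (InfC d D) (InfC d D') (n + 1) := by
      refine AddSubgroup.mem_inf.mpr ⟨AddSubgroup.mem_inf.mpr
        ⟨sub_mem hu (hD (n + 1) hcm), AddSubgroup.mem_comap.mpr
          (hdx ▸ hD n hv)⟩, AddSubgroup.mem_comap.mpr ?_⟩
      rw [hdx]
      cases n with
      | zero => exact hv
      | succ m =>
        refine AddSubgroup.mem_inf.mpr ⟨hv, AddSubgroup.mem_comap.mpr ?_⟩
        rw [← hdx, hdd]
        exact zero_mem _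
    refine ⟨u - c, hxZ, AddSubgroup.mem_inf.mpr ⟨?_, ?_⟩⟩
    · refine AddSubgroup.mem_sup.mpr ⟨d (n + 1) a,
        AddSubgroup.mem_map.mpr ⟨a, le_SupC d D (n + 2) ha, rfl⟩,
        c, le_SupC d D' (n + 1) hcm, ?_⟩
      rw [← hupy]; abel
    · exact sub_mem hy
        (relZ_mono d (InfC_le_SupC d D) (InfC_le_SupC d D') (n + 1) hxZ)

end Aux

/-- For a chain complex `(C, d)` and graded abelian subgroups
`D' ⊆ D ⊆ C`, the induced chain map `Inf(D,C)/Inf(D',C) → Sup(D,C)/Sup(D',C)`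
induces an isomorphism on homology in every degree. -/
theorem relative_inf_sup_homology_iso
    {C : ℕ → Type} [∀ n, AddCommGroup (C n)]
    (d : ∀ n, C (n + 1) →+ C n) (hdd : ∀ n x, d n (d (n + 1) x) = 0)
    (D D' : ∀ n, AddSubgroup (C n)) (hD : ∀ n, D' n ≤ D n) (n : ℕ) :
    Function.Bijective
      (inducedRelMap d (K := InfC d D) (L := InfC d D')
        (K' := SupC d D) (L' := SupC d D')
        (InfC_le_SupC d D) (InfC_le_SupC d D') n) := by
  constructor
  · rw [injective_iff_map_eq_zero]
    intro q hq
    obtain ⟨z, rfl⟩ := QuotientAddGroup.mk'_surjective _ q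
    rw [QuotientAddGroup.mk'_apply] at hq ⊢
    rw [inducedRelMap, QuotientAddGroup.map_mk, QuotientAddGroup.eq_zero_iff,
      AddSubgroup.mem_addSubgroupOf, AddSubgroup.coe_inclusion] at hq
    rw [QuotientAddGroup.eq_zero_iff, AddSubgroup.mem_addSubgroupOf]
    exact key_inj d hdd D D' hD n z z.2 hq
  · intro q
    obtain ⟨z, rfl⟩ := QuotientAddGroup.mk'_surjective _ q
    obtain ⟨x, hxZ, hxB⟩ := key_surj d hdd D D' hD n z z.2
    refine ⟨QuotientAddGroup.mk ⟨x, hxZ⟩, ?_⟩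
    rw [QuotientAddGroup.mk'_apply, inducedRelMap, QuotientAddGroup.map_mk,
      QuotientAddGroup.eq_iff_sub_mem, AddSubgroup.mem_addSubgroupOf]
    simpa using neg_mem hxB
end

section
/- For a hypergraph triple B ⊆ A ⊆ H, the ranks of relative embedded homology satisfy rank H_n(H, B) ≤ rank H_n(H, A) + rank H_n(A, B) for all n ≥ 0. -/
section AuxDD

variable {V : Type} [LinearOrder V] {G : Type} [AddCommGroup G]

private lemma filter_lt_erase_card {σ : Finset V} {u v : V} (h : ¬ v < u) :
    ((σ.erase v).filter (fun w => w < u)).card = (σ.filter (fun w => w < u)).card := by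
  rw [Finset.filter_erase, Finset.erase_eq_of_notMem (by simp [h])]

private lemma filter_lt_card_of_lt {σ : Finset V} {u v : V} (h : u < v) (hu : u ∈ σ) :
    (σ.filter (fun w => w < v)).card = ((σ.erase u).filter (fun w => w < v)).card + 1 := by
  rw [Finset.filter_erase, Finset.card_erase_of_mem (by simp [hu, h]),
    Nat.sub_add_cancel (Finset.card_pos.2 ⟨u, by simp [hu, h]⟩)]

private lemma sign_skew {σ : Finset V} {u v : V} (hu : u ∈ σ) (hv : v ∈ σ) (hne : u ≠ v) :
    ((-1 : ℤ) ^ (((σ.erase v).filter (fun w => w < u)).card) *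
      (-1 : ℤ) ^ ((σ.filter (fun w => w < v)).card)) =
    -(((-1 : ℤ) ^ (((σ.erase u).filter (fun w => w < v)).card)) *
      (-1 : ℤ) ^ ((σ.filter (fun w => w < u)).card)) := by
  rcases hne.lt_or_gt with h | h
  · rw [filter_lt_erase_card (not_lt.2 h.le), filter_lt_card_of_lt h hu, pow_succ]
    ring
  · rw [filter_lt_erase_card (not_lt.2 h.le), filter_lt_card_of_lt h hv, pow_succ]
    ring

private lemma bdry_single (n : ℕ) (τ : Simp V (n + 1)) (g : G) :
    bdry V G n (Finsupp.single τ g) = bdryFun V G n τ g := by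
  rw [bdry, Finsupp.liftAddHom_apply_single]
  rfl

private lemma card_erase_erase (n : ℕ) {σ : Finset V} {u v : V} (hu : u ∈ σ) (hv : v ∈ σ)
    (hne : u ≠ v) (h : σ.card = n + 3) : ((σ.erase v).erase u).card = n + 1 := by
  rw [Finset.card_erase_of_mem (Finset.mem_erase.2 ⟨hne, hu⟩), Finset.card_erase_of_mem hv, h]
  omega

private lemma single_add_single_eq_zero {α : Type*} {M : Type*} [AddCommGroup M] {τ τ' : α}
    (h : τ = τ') {x y : M} (hxy : x + y = 0) :
    Finsupp.single τ x + Finsupp.single τ' y = 0 := by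
  subst h; rw [← Finsupp.single_add, hxy, Finsupp.single_zero]

private lemma bdry_bdry_single (n : ℕ) (σ : Simp V (n + 2)) (g : G) :
    bdry V G n (bdry V G (n + 1) (Finsupp.single σ g)) = 0 := by
  classical
  set f : V × V → Ch V G n := fun p =>
    if h : p.1 ∈ σ.1 ∧ p.2 ∈ σ.1 ∧ p.2 ≠ p.1 then
      Finsupp.single
        ⟨(σ.1.erase p.1).erase p.2, card_erase_erase n h.2.1 h.1 h.2.2 σ.2⟩
        (((-1 : ℤ) ^ (((σ.1.erase p.1).filter fun w => w < p.2).card)) •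
          (((-1 : ℤ) ^ ((σ.1.filter fun w => w < p.1).card)) • g))
    else 0 with hf
  have step1 : bdry V G n (bdry V G (n + 1) (Finsupp.single σ g)) =
      ∑ p ∈ σ.1 ×ˢ σ.1, f p := by
    calc bdry V G n (bdry V G (n + 1) (Finsupp.single σ g))
        = ∑ v ∈ σ.1.attach, ∑ u ∈ (σ.1.erase v.1).attach, f (v.1, u.1) := by
          rw [bdry_single, bdryFun, map_sum]
          refine Finset.sum_congr rfl fun v _ => ?_
          rw [bdry_single, bdryFun]
          refine Finset.sum_congr rfl fun u _ => ?_
          simp only [hf]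
          rw [dif_pos ⟨v.2, Finset.mem_of_mem_erase u.2, (Finset.mem_erase.1 u.2).1⟩]
      _ = ∑ v ∈ σ.1.attach, ∑ u ∈ σ.1.erase v.1, f (v.1, u) := by
          refine Finset.sum_congr rfl fun v _ => ?_
          exact Finset.sum_attach (σ.1.erase v.1) fun u => f (v.1, u)
      _ = ∑ v ∈ σ.1.attach, ∑ u ∈ σ.1, f (v.1, u) := by
          refine Finset.sum_congr rfl fun v _ => ?_
          refine Finset.sum_subset (Finset.erase_subset _ _) fun x hx hx' => ?_
          have hxv : x = v.1 := by
            by_contra hne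
            exact hx' (Finset.mem_erase.2 ⟨hne, hx⟩)
          simp only [hf]
          rw [dif_neg (by rintro ⟨-, -, hne⟩; exact hne hxv)]
      _ = ∑ v ∈ σ.1, ∑ u ∈ σ.1, f (v, u) :=
          Finset.sum_attach σ.1 fun v => ∑ u ∈ σ.1, f (v, u)
      _ = ∑ p ∈ σ.1 ×ˢ σ.1, f p := by rw [Finset.sum_product]
  rw [step1]
  refine Finset.sum_involution (fun p _ => p.swap) ?_ ?_ ?_ ?_
  · intro p hp
    simp only [hf]
    by_cases h : p.1 ∈ σ.1 ∧ p.2 ∈ σ.1 ∧ p.2 ≠ p.1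
    · rw [dif_pos h, dif_pos (show p.swap.1 ∈ σ.1 ∧ p.swap.2 ∈ σ.1 ∧ p.swap.2 ≠ p.swap.1 from
        ⟨h.2.1, h.1, h.2.2.symm⟩)]
      refine single_add_single_eq_zero (Subtype.ext Finset.erase_right_comm) ?_
      rw [smul_smul, smul_smul, sign_skew h.2.1 h.1 h.2.2, neg_smul]
      exact neg_add_cancel _
    · rw [dif_neg h, dif_neg (by
        rintro ⟨h1, h2, h3⟩
        exact h ⟨h2, h1, fun e => h3 e.symm⟩), add_zero]
  · intro p _ h0 hsw
    apply h0
    simp only [hf]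
    rw [dif_neg]
    rintro ⟨-, -, hne⟩
    exact hne (congrArg Prod.fst hsw)
  · intro p hp
    simp only [Finset.mem_product] at hp ⊢
    exact ⟨hp.2, hp.1⟩
  · intro p _
    rfl

lemma bdry_bdry (n : ℕ) (c : Ch V G (n + 2)) :
    bdry V G n (bdry V G (n + 1) c) = 0 := by
  induction c using Finsupp.induction with
  | zero => simp
  | single_add a b f _ _ ih => rw [map_add, map_add, bdry_bdry_single, ih, add_zero]

end AuxDD

section AuxRank

private lemma moduleFinite_addSubgroup {M : Type*} [AddCommGroup M] [Module.Finite ℤ M]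
    (S : AddSubgroup M) : Module.Finite ℤ S := by
  have : Module.Finite ℤ S.toIntSubmodule :=
    Module.Finite.iff_fg.mpr (IsNoetherian.noetherian _)
  exact this

private lemma moduleFinite_quotient {M : Type*} [AddCommGroup M] [Module.Finite ℤ M]
    (S : AddSubgroup M) : Module.Finite ℤ (M ⧸ S) :=
  Module.Finite.of_surjective (QuotientAddGroup.mk' S).toIntLinearMap
    (QuotientAddGroup.mk'_surjective S)

private lemma finrank_le_of_ker_le_range {M₁ M₂ M₃ : Type} [AddCommGroup M₁] [AddCommGroup M₂]
    [AddCommGroup M₃] [Module.Finite ℤ M₁] [Module.Finite ℤ M₂] [Module.Finite ℤ M₃]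
    (f : M₁ →ₗ[ℤ] M₂) (g : M₃ →ₗ[ℤ] M₁) (h : LinearMap.ker f ≤ LinearMap.range g) :
    Module.finrank ℤ M₁ ≤ Module.finrank ℤ M₂ + Module.finrank ℤ M₃ := by
  have h1 : Module.rank ℤ (LinearMap.range f) + Module.rank ℤ (LinearMap.ker f)
      = Module.rank ℤ M₁ := LinearMap.rank_range_add_rank_ker f
  have e1 : Module.finrank ℤ M₁ =
      Module.finrank ℤ (LinearMap.range f) + Module.finrank ℤ (LinearMap.ker f) := by
    have h2 := congrArg Cardinal.toNat h1
    rw [Cardinal.toNat_add (Module.rank_lt_aleph0 _ _) (Module.rank_lt_aleph0 _ _)] at h2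
    exact h2.symm
  have h2 : Module.finrank ℤ (LinearMap.range f) ≤ Module.finrank ℤ M₂ :=
    Submodule.finrank_le _
  have h3 : Module.finrank ℤ (LinearMap.ker f) ≤ Module.finrank ℤ (LinearMap.range g) :=
    Submodule.finrank_mono h
  have h4 : Module.finrank ℤ (LinearMap.range g) ≤ Module.finrank ℤ M₃ :=
    LinearMap.finrank_range_le g
  omega

end AuxRank

/-- For a hypergraph triple `B ⊆ A ⊆ H` (integer coefficients), the ranks
of relative embedded homology satisfy
`rank H_n(H, B) ≤ rank H_n(H, A) + rank H_n(A, B)` for all `n ≥ 0`. -/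
theorem rank_relative_embedded_homology_subadditive
    (V : Type) [LinearOrder V] [Fintype V]
    (H A B : Set (Finset V)) (hH : ∀ σ ∈ H, σ.Nonempty)
    (hB : B ⊆ A) (hA : A ⊆ H) (n : ℕ) :
    Module.finrank ℤ
        (relH (bdry V ℤ) (InfC (bdry V ℤ) fun m => chainsOn V ℤ H m)
          (InfC (bdry V ℤ) fun m => chainsOn V ℤ B m) n) ≤
      Module.finrank ℤ
          (relH (bdry V ℤ) (InfC (bdry V ℤ) fun m => chainsOn V ℤ H m)
            (InfC (bdry V ℤ) fun m => chainsOn V ℤ A m) n) +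
        Module.finrank ℤ
          (relH (bdry V ℤ) (InfC (bdry V ℤ) fun m => chainsOn V ℤ A m)
            (InfC (bdry V ℤ) fun m => chainsOn V ℤ B m) n) := by
  classical
  set d := bdry V ℤ with hd
  set KH : ∀ m, AddSubgroup (Ch V ℤ m) := InfC d fun m => chainsOn V ℤ H m with hKH
  set KA : ∀ m, AddSubgroup (Ch V ℤ m) := InfC d fun m => chainsOn V ℤ A m with hKA
  set KB : ∀ m, AddSubgroup (Ch V ℤ m) := InfC d fun m => chainsOn V ℤ B m with hKB
  have hBA : ∀ m, KB m ≤ KA m := InfC_mono d fun m => chainsOn_mono V ℤ hB m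
  have hAH : ∀ m, KA m ≤ KH m := InfC_mono d fun m => chainsOn_mono V ℤ hA m
  have hrefl : ∀ m, KH m ≤ KH m := fun m => le_refl _
  have hreflB : ∀ m, KB m ≤ KB m := fun m => le_refl _
  haveI : Module.Finite ℤ (Ch V ℤ n) :=
    Module.Finite.equiv (Finsupp.linearEquivFunOnFinite ℤ ℤ (Simp V n)).symm
  haveI fZHB : Module.Finite ℤ (relZ d KH KB n) := moduleFinite_addSubgroup _
  haveI fZHA : Module.Finite ℤ (relZ d KH KA n) := moduleFinite_addSubgroup _
  haveI fZAB : Module.Finite ℤ (relZ d KA KB n) := moduleFinite_addSubgroup _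
  haveI f1 : Module.Finite ℤ (relH d KH KB n) := moduleFinite_quotient _
  haveI f2 : Module.Finite ℤ (relH d KH KA n) := moduleFinite_quotient _
  haveI f3 : Module.Finite ℤ (relH d KA KB n) := moduleFinite_quotient _
  set F : relH d KH KB n →ₗ[ℤ] relH d KH KA n :=
    (inducedRelMap d hrefl hBA n).toIntLinearMap with hF
  set G : relH d KA KB n →ₗ[ℤ] relH d KH KB n :=
    (inducedRelMap d hAH hreflB n).toIntLinearMap with hG
  refine finrank_le_of_ker_le_range F G ?_
  rintro x hx
  obtain ⟨z, rfl⟩ := QuotientAddGroup.mk'_surjective _ x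
  have hx' : (AddSubgroup.inclusion (relZ_mono d hrefl hBA n) z : relZ d KH KA n)
      ∈ (relB d KH KA n).addSubgroupOf (relZ d KH KA n) := by
    rw [← QuotientAddGroup.eq_zero_iff]
    exact hx
  have hzB : (z : Ch V ℤ n) ∈ relB d KH KA n := hx'
  have hzB' : (z : Ch V ℤ n) ∈ (KH (n + 1)).map (d n) ⊔ KA n := hzB.1
  rw [AddSubgroup.mem_sup] at hzB'
  obtain ⟨y, hy, a, ha, hya⟩ := hzB'
  rw [AddSubgroup.mem_map] at hy
  obtain ⟨w, hw, rfl⟩ := hy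
  -- `a` is a relative cycle of the pair (A, B)
  have haZ : a ∈ relZ d KA KB n := by
    cases n with
    | zero => exact ha
    | succ m =>
      refine ⟨ha, ?_⟩
      have hdz : d m (z : Ch V ℤ (m + 1)) ∈ KB m := z.2.2
      have hddw : d m (d (m + 1) w) = 0 := bdry_bdry m w
      have hda : d m a = d m (z : Ch V ℤ (m + 1)) := by
        have : a = (z : Ch V ℤ (m + 1)) - d (m + 1) w := by
          rw [← hya]; abel
        rw [this, map_sub, hddw, sub_zero]
      simpa [AddSubgroup.mem_comap, hda] using hdz
  refine ⟨QuotientAddGroup.mk' _ ⟨a, haZ⟩, ?_⟩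
  rw [hG]
  show (inducedRelMap d hAH hreflB n) (QuotientAddGroup.mk' _ ⟨a, haZ⟩)
      = QuotientAddGroup.mk' _ z
  rw [QuotientAddGroup.mk'_apply, QuotientAddGroup.mk'_apply, inducedRelMap,
    QuotientAddGroup.map_mk, QuotientAddGroup.eq_iff_sub_mem]
  show _ ∈ (relB d KH KB n).addSubgroupOf (relZ d KH KB n)
  rw [AddSubgroup.mem_addSubgroupOf]
  have hincl : ((AddSubgroup.inclusion (relZ_mono d hAH hreflB n) ⟨a, haZ⟩ :
      relZ d KH KB n) : Ch V ℤ n) = a := rfl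
  rw [AddSubgroup.coe_sub, hincl]
  have hsub : a - (z : Ch V ℤ n) = -(d n w) := by rw [← hya]; abel
  rw [hsub]
  refine AddSubgroup.mem_inf.2
    ⟨AddSubgroup.mem_sup_left (neg_mem (AddSubgroup.mem_map_of_mem _ hw)), ?_⟩
  have haZ' : a ∈ relZ d KH KB n := relZ_mono d hAH hreflB n haZ
  have hzZ : (z : Ch V ℤ n) ∈ relZ d KH KB n := z.2
  exact hsub ▸ sub_mem haZ' hzZ
end
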